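/- For integers n ≥ 1 and real numbers a, b > 0: ∑_{l=0}^{n} C(n,l) · ((a)_l (b)_{n-l} / (a+b)_n) · B_l(x) B_{n-l}(x) = ∑_{l=0}^{n} C(n,l) · ((a(b)_l + b(a)_l)/(a+b)_{l+1}) · B_l B_{n-l}(x) + (ab/((a+b+1)(a+b))) · n · B_{n-1}(x), as an identity of polynomials in x. -/

import Mathlib

open Polynomial Finset

noncomputable section GBCProof


/-- real Bernoulli polynomial -/
def Bp (m : ℕ) : ℝ[X] := (Polynomial.bernoulli m).map (algebraMap ℚ ℝ)

/-- real Bernoulli number -/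
def βr (m : ℕ) : ℝ := ((bernoulli m : ℚ) : ℝ)

lemma Bp_eval_eq_aeval (m : ℕ) (x : ℝ) : (Bp m).eval x = aeval x (Polynomial.bernoulli m) := by
  simp [Bp, aeval_def, eval_map]

lemma Bp_zero : Bp 0 = 1 := by simp [Bp]

lemma Bp_eval_zero (m : ℕ) : (Bp m).eval 0 = βr m := by
  rw [Bp, Polynomial.eval_zero_map, Polynomial.bernoulli_eval_zero]; rfl

lemma Bp_eval_one (m : ℕ) : (Bp m).eval 1 = ((bernoulli' m : ℚ) : ℝ) := by
  rw [Bp, Polynomial.eval_one_map, Polynomial.bernoulli_eval_one]; rfl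

lemma Bp_deriv (k : ℕ) : derivative (Bp (k+1)) = (k+1 : ℝ[X]) * Bp k := by
  simp only [Bp, derivative_map, Polynomial.derivative_bernoulli_add_one, Polynomial.map_mul]
  norm_num

/-- the integral functional -/
def J (p : ℝ[X]) : ℝ := ∫ x in (0:ℝ)..1, p.eval x

lemma J_deriv (p : ℝ[X]) : J (derivative p) = p.eval 1 - p.eval 0 := by
  apply intervalIntegral.integral_eq_sub_of_hasDerivAt (fun x _ => p.hasDerivAt x)
  exact ((derivative p).continuous).intervalIntegrable _ _

lemma J_one : J 1 = 1 := by simp [J]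

lemma J_Bp_zero : J (Bp 0) = 1 := by rw [Bp_zero]; exact J_one

lemma J_Bp (m : ℕ) (hm : 1 ≤ m) : J (Bp m) = 0 := by
  have h := J_deriv (Bp (m+1))
  rw [Bp_deriv m] at h
  have : J ((m+1 : ℝ[X]) * Bp m) = (m+1 : ℝ) * J (Bp m) := by
    simp only [J, eval_mul]
    rw [← intervalIntegral.integral_const_mul]
    congr 1; ext x; norm_num
  have hne : m + 1 ≠ 1 := by omega
  rw [this, Bp_eval_one, Bp_eval_zero, βr, ← bernoulli_eq_bernoulli'_of_ne_one hne,
    sub_self] at h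
  have hm1 : (m:ℝ) + 1 ≠ 0 := by positivity
  exact (mul_eq_zero.mp h).resolve_left hm1

lemma J_natmul (c : ℕ) (p : ℝ[X]) : J ((c : ℝ[X]) * p) = (c:ℝ) * J p := by
  simp only [J, eval_mul, eval_natCast]
  exact intervalIntegral.integral_const_mul _ _

/-- boundary term for integration by parts -/
lemma bnd (l m : ℕ) (hl : 1 ≤ l) (hm : 2 ≤ m) :
    (Bp l * Bp m).eval 1 - (Bp l * Bp m).eval 0
      = if l = 1 then βr m else 0 := by
  have hm' : m ≠ 1 := by omega
  rw [eval_mul, eval_mul, Bp_eval_one, Bp_eval_one, Bp_eval_zero, Bp_eval_zero,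
    ← bernoulli_eq_bernoulli'_of_ne_one hm']
  by_cases h : l = 1
  · subst h
    simp only [if_true, bernoulli'_one, _root_.bernoulli_one, βr]
    push_cast
    ring
  · rw [if_neg h, ← bernoulli_eq_bernoulli'_of_ne_one h]
    simp only [βr]; ring

/-- key integration by parts step -/
lemma ibp (j k : ℕ) :
    ((k:ℝ)+1) * J (Bp (j+1) * Bp k)
      = ((Bp (j+1) * Bp (k+1)).eval 1 - (Bp (j+1) * Bp (k+1)).eval 0)
        - ((j:ℝ)+1) * J (Bp j * Bp (k+1)) := by
  have hd : derivative (Bp (j+1) * Bp (k+1))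
      = ((j:ℝ[X])+1) * (Bp j * Bp (k+1)) + ((k:ℝ[X])+1) * (Bp (j+1) * Bp k) := by
    rw [derivative_mul, Bp_deriv, Bp_deriv]; ring
  have h := J_deriv (Bp (j+1) * Bp (k+1))
  rw [hd] at h
  have hadd : ∀ p q : ℝ[X], J (p + q) = J p + J q := by
    intro p q
    simp only [J, eval_add]
    exact intervalIntegral.integral_add ((p.continuous).intervalIntegrable _ _)
      ((q.continuous).intervalIntegrable _ _)
  have e1 : ((j:ℝ[X])+1) = ((j+1 : ℕ) : ℝ[X]) := by push_cast; ring
  have e2 : ((k:ℝ[X])+1) = ((k+1 : ℕ) : ℝ[X]) := by push_cast; ring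
  rw [hadd, e1, e2, J_natmul, J_natmul] at h
  push_cast at h ⊢
  linarith

/-- the main product integral formula -/
lemma J_BB (l k : ℕ) (hl : 1 ≤ l) (hk : 1 ≤ k) :
    ((l+k).choose l : ℝ) * J (Bp l * Bp k) = (-1)^(l-1) * βr (l+k) := by
  induction l generalizing k with
  | zero => omega
  | succ j ih =>
    rcases Nat.eq_zero_or_pos j with hj | hj
    · subst hj
      have h := ibp 0 k
      rw [bnd 1 (k+1) (by omega) (by omega), if_pos rfl, Bp_zero, one_mul,
        J_Bp (k+1) (by omega)] at h
      have : ((1+k).choose 1 : ℝ) = (k:ℝ)+1 := by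
        rw [Nat.choose_one_right]; push_cast; ring
      rw [this, h]
      simp [Nat.add_comm 1 k]
    · have h := ibp j k
      rw [bnd (j+1) (k+1) (by omega) (by omega), if_neg (by omega), zero_sub] at h
      have ihh := ih (k+1) hj (by omega)
      have hchoose : (j+1+k).choose (j+1) * (j+1) = (j+(k+1)).choose j * (k+1) := by
        have := Nat.choose_succ_right_eq (j+1+k) j
        have harr : j + 1 + k = j + (k+1) := by omega
        rw [harr] at this ⊢
        rw [this]
        congr 1
        omega
      have hk1 : (k:ℝ) + 1 ≠ 0 := by positivity
      -- goal: C(j+1+k, j+1) * J(B(j+1)*Bk) = (-1)^j * βr (j+1+k)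
      have key : ((k:ℝ)+1) * (((j+1+k).choose (j+1) : ℝ) * J (Bp (j+1) * Bp k))
          = ((k:ℝ)+1) * ((-1)^(j+1-1) * βr (j+1+k)) := by
        calc ((k:ℝ)+1) * (((j+1+k).choose (j+1) : ℝ) * J (Bp (j+1) * Bp k))
            = ((j+1+k).choose (j+1) : ℝ) * (((k:ℝ)+1) * J (Bp (j+1) * Bp k)) := by ring
          _ = ((j+1+k).choose (j+1) : ℝ) * (-(((j:ℝ)+1) * J (Bp j * Bp (k+1)))) := by rw [h]
          _ = -((((j+1+k).choose (j+1) * (j+1) : ℕ) : ℝ) * J (Bp j * Bp (k+1))) := by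
              push_cast; ring
          _ = -((((j+(k+1)).choose j * (k+1) : ℕ) : ℝ) * J (Bp j * Bp (k+1))) := by
              rw [hchoose]
          _ = ((k:ℝ)+1) * (-(((j+(k+1)).choose j : ℝ) * J (Bp j * Bp (k+1)))) := by
              push_cast; ring
          _ = ((k:ℝ)+1) * (-((-1)^(j-1) * βr (j+(k+1)))) := by rw [ihh]
          _ = ((k:ℝ)+1) * ((-1)^(j+1-1) * βr (j+1+k)) := by
              have h1 : j + (k+1) = j+1+k := by omega
              have h2 : j + 1 - 1 = (j-1) + 1 := by omega
              rw [h1, h2, pow_succ]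
              ring
      exact mul_left_cancel₀ hk1 key

lemma hasDerivAt_Bp (m : ℕ) (x : ℝ) :
    HasDerivAt (fun y => (Bp m).eval y) ((m:ℝ) * (Bp (m-1)).eval x) x := by
  cases m with
  | zero =>
    simp only [Bp_zero, eval_one, Nat.cast_zero, zero_mul]
    exact hasDerivAt_const x 1
  | succ k =>
    have h := (Bp (k+1)).hasDerivAt x
    rw [Bp_deriv k] at h
    simpa using h

variable (a b : ℝ)

def wc (n l : ℕ) : ℝ :=
  (ascPochhammer ℝ l).eval a * (ascPochhammer ℝ (n - l)).eval b / (ascPochhammer ℝ n).eval (a + b)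

def cc (l : ℕ) : ℝ :=
  (a * (ascPochhammer ℝ l).eval b + b * (ascPochhammer ℝ l).eval a) /
    (ascPochhammer ℝ (l + 1)).eval (a + b)

def Kc : ℝ := a * b / ((a + b + 1) * (a + b))

def Lf (n : ℕ) (x : ℝ) : ℝ :=
  ∑ l ∈ range (n+1), (n.choose l : ℝ) * wc a b n l * (Bp l).eval x * (Bp (n-l)).eval x

def Rf (n : ℕ) (x : ℝ) : ℝ :=
  (∑ l ∈ range (n+1), (n.choose l : ℝ) * cc a b l * βr l * (Bp (n-l)).eval x)
    + Kc a b * n * (Bp (n-1)).eval x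

variable {a b}

lemma wc_rec (ha : 0 < a) (hb : 0 < b) {n l : ℕ} (h : l ≤ n) :
    wc a b (n+1) (l+1) + wc a b (n+1) l = wc a b n l := by
  have h1 : n + 1 - (l+1) = n - l := by omega
  have h2 : n + 1 - l = (n - l) + 1 := by omega
  have hd : (ascPochhammer ℝ n).eval (a+b) ≠ 0 :=
    ne_of_gt (ascPochhammer_pos n (a+b) (by linarith))
  have hd1 : a + b + (n:ℝ) ≠ 0 := by positivity
  simp only [wc, h1, h2, ascPochhammer_succ_eval]
  have hcast : ((n - l : ℕ) : ℝ) = (n : ℝ) - (l : ℝ) := by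
    rw [Nat.cast_sub h]
  rw [hcast]
  field_simp
  ring

lemma choose_cast_one (n l : ℕ) :
    ((n+1).choose (l+1) : ℝ) * ((l:ℝ)+1) = ((n:ℝ)+1) * (n.choose l : ℝ) := by
  have := Nat.add_one_mul_choose_eq n l
  have : ((n+1) * n.choose l : ℕ) = ((n+1).choose (l+1) * (l+1) : ℕ) := this
  have := congrArg (fun t : ℕ => (t : ℝ)) this
  push_cast at this
  linarith

lemma choose_cast_two {n l : ℕ} (h : l ≤ n) :
    ((n+1).choose l : ℝ) * (((n+1-l : ℕ)):ℝ) = ((n:ℝ)+1) * (n.choose l : ℝ) := by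
  have h1 := Nat.choose_succ_right_eq (n+1) l
  -- C(n+1, l+1) * (l+1) = C(n+1, l) * (n+1-l)
  have h2 := congrArg (fun t : ℕ => (t : ℝ)) h1
  push_cast [Nat.cast_sub (by omega : l ≤ n+1)] at h2
  have h3 := choose_cast_one n l
  have hcast : ((n+1-l : ℕ) : ℝ) = (n:ℝ) + 1 - l := by
    rw [Nat.cast_sub (by omega : l ≤ n+1)]; push_cast; ring
  rw [hcast]
  linarith

lemma hasDerivAt_Lf (ha : 0 < a) (hb : 0 < b) (n : ℕ) (x : ℝ) :
    HasDerivAt (Lf a b (n+1)) (((n:ℝ)+1) * Lf a b n x) x := by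
  have hterm : ∀ l ∈ range (n+2), HasDerivAt
      (fun y => ((n+1).choose l : ℝ) * wc a b (n+1) l * (Bp l).eval y * (Bp (n+1-l)).eval y)
      (((n+1).choose l : ℝ) * wc a b (n+1) l * ((l:ℝ) * (Bp (l-1)).eval x) * (Bp (n+1-l)).eval x
        + ((n+1).choose l : ℝ) * wc a b (n+1) l * (Bp l).eval x
          * (((n+1-l : ℕ):ℝ) * (Bp (n+1-l-1)).eval x)) x := by
    intro l _
    exact (((hasDerivAt_Bp l x).const_mul (((n+1).choose l : ℝ) * wc a b (n+1) l)).mul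
      (hasDerivAt_Bp (n+1-l) x))
  have hsum := HasDerivAt.fun_sum hterm
  have heq : ∑ l ∈ range (n+2),
      (((n+1).choose l : ℝ) * wc a b (n+1) l * ((l:ℝ) * (Bp (l-1)).eval x) * (Bp (n+1-l)).eval x
        + ((n+1).choose l : ℝ) * wc a b (n+1) l * (Bp l).eval x
          * (((n+1-l : ℕ):ℝ) * (Bp (n+1-l-1)).eval x))
      = ((n:ℝ)+1) * Lf a b n x := by
    rw [Finset.sum_add_distrib]
    have hA : ∑ l ∈ range (n+2),
        ((n+1).choose l : ℝ) * wc a b (n+1) l * ((l:ℝ) * (Bp (l-1)).eval x) * (Bp (n+1-l)).eval x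
        = ∑ l ∈ range (n+1),
          ((n+1).choose (l+1) : ℝ) * wc a b (n+1) (l+1) * (((l:ℝ)+1) * (Bp l).eval x)
            * (Bp (n-l)).eval x := by
      rw [Finset.sum_range_succ']
      simp only [Nat.cast_zero, zero_mul, mul_zero, add_zero]
      apply Finset.sum_congr rfl
      intro l hl
      have e1 : n + 1 - (l+1) = n - l := by omega
      have e2 : l + 1 - 1 = l := by omega
      rw [e1, e2]
      push_cast
      ring
    have hB : ∑ l ∈ range (n+2),
        ((n+1).choose l : ℝ) * wc a b (n+1) l * (Bp l).eval x
          * (((n+1-l : ℕ):ℝ) * (Bp (n+1-l-1)).eval x)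
        = ∑ l ∈ range (n+1),
          ((n+1).choose l : ℝ) * wc a b (n+1) l * (Bp l).eval x
            * (((n+1-l : ℕ):ℝ) * (Bp (n-l)).eval x) := by
      rw [Finset.sum_range_succ]
      simp only [Nat.sub_self, Nat.cast_zero, zero_mul, mul_zero, add_zero]
      apply Finset.sum_congr rfl
      intro l hl
      have e1 : n + 1 - l - 1 = n - l := by omega
      rw [e1]
    rw [hA, hB, ← Finset.sum_add_distrib, Lf, Finset.mul_sum]
    apply Finset.sum_congr rfl
    intro l hl
    have hln : l ≤ n := by
      simp only [Finset.mem_range] at hl; omega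
    have hw := wc_rec ha hb hln (a := a) (b := b)
    have hc1 := choose_cast_one n l
    have hc2 := choose_cast_two hln
    calc ((n+1).choose (l+1) : ℝ) * wc a b (n+1) (l+1) * (((l:ℝ)+1) * (Bp l).eval x)
            * (Bp (n-l)).eval x
          + ((n+1).choose l : ℝ) * wc a b (n+1) l * (Bp l).eval x
            * (((n+1-l : ℕ):ℝ) * (Bp (n-l)).eval x)
        = (((n+1).choose (l+1) : ℝ) * ((l:ℝ)+1)) * wc a b (n+1) (l+1)
            * ((Bp l).eval x * (Bp (n-l)).eval x)
          + (((n+1).choose l : ℝ) * ((n+1-l : ℕ):ℝ)) * wc a b (n+1) l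
            * ((Bp l).eval x * (Bp (n-l)).eval x) := by ring
      _ = ((n:ℝ)+1) * (n.choose l : ℝ) * (wc a b (n+1) (l+1) + wc a b (n+1) l)
            * ((Bp l).eval x * (Bp (n-l)).eval x) := by rw [hc1, hc2]; ring
      _ = ((n:ℝ)+1) * ((n.choose l : ℝ) * wc a b n l * (Bp l).eval x * (Bp (n-l)).eval x) := by
            rw [hw]; ring
  rw [heq] at hsum
  exact hsum

lemma hasDerivAt_Rf (n : ℕ) (x : ℝ) :
    HasDerivAt (Rf a b (n+1)) (((n:ℝ)+1) * Rf a b n x) x := by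
  have hterm : ∀ l ∈ range (n+2), HasDerivAt
      (fun y => ((n+1).choose l : ℝ) * cc a b l * βr l * (Bp (n+1-l)).eval y)
      (((n+1).choose l : ℝ) * cc a b l * βr l
        * (((n+1-l : ℕ):ℝ) * (Bp (n+1-l-1)).eval x)) x := by
    intro l _
    exact (hasDerivAt_Bp (n+1-l) x).const_mul _
  have hK : HasDerivAt (fun y => Kc a b * ((n:ℝ)+1) * (Bp n).eval y)
      (Kc a b * ((n:ℝ)+1) * ((n:ℝ) * (Bp (n-1)).eval x)) x :=
    (hasDerivAt_Bp n x).const_mul _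
  have hsum := (HasDerivAt.fun_sum hterm).fun_add hK
  have hfun : (fun y => (∑ l ∈ range (n+2),
        ((n+1).choose l : ℝ) * cc a b l * βr l * (Bp (n+1-l)).eval y)
      + Kc a b * ((n:ℝ)+1) * (Bp n).eval y) = Rf a b (n+1) := by
    funext y
    simp only [Rf]
    push_cast
    norm_num
  have heq : (∑ l ∈ range (n+2), ((n+1).choose l : ℝ) * cc a b l * βr l
        * (((n+1-l : ℕ):ℝ) * (Bp (n+1-l-1)).eval x))
      + Kc a b * ((n:ℝ)+1) * ((n:ℝ) * (Bp (n-1)).eval x)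
      = ((n:ℝ)+1) * Rf a b n x := by
    rw [Finset.sum_range_succ]
    simp only [Nat.sub_self, Nat.cast_zero, zero_mul, mul_zero, add_zero]
    rw [Rf, mul_add ((n:ℝ)+1), Finset.mul_sum]
    congr 1
    · apply Finset.sum_congr rfl
      intro l hl
      have hln : l ≤ n := by simp only [Finset.mem_range] at hl; omega
      have e1 : n + 1 - l - 1 = n - l := by omega
      rw [e1]
      have hc2 := choose_cast_two hln
      calc ((n+1).choose l : ℝ) * cc a b l * βr l * (((n+1-l : ℕ):ℝ) * (Bp (n-l)).eval x)
          = (((n+1).choose l : ℝ) * ((n+1-l : ℕ):ℝ)) * cc a b l * βr l * (Bp (n-l)).eval x := by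
            ring
        _ = ((n:ℝ)+1) * ((n.choose l : ℝ) * cc a b l * βr l * (Bp (n-l)).eval x) := by
            rw [hc2]; ring
    · ring
  rw [heq] at hsum
  rw [← hfun]
  exact hsum

lemma int_Lf (n : ℕ) : ∫ x in (0:ℝ)..1, Lf a b n x
    = ∑ l ∈ range (n+1), (n.choose l : ℝ) * wc a b n l * J (Bp l * Bp (n-l)) := by
  rw [show (fun x => Lf a b n x) = fun x => ∑ l ∈ range (n+1),
      (n.choose l : ℝ) * wc a b n l * (Bp l * Bp (n-l)).eval x from by
    funext x; simp only [Lf, eval_mul]; apply Finset.sum_congr rfl; intro l _; ring]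
  rw [intervalIntegral.integral_finset_sum]
  · apply Finset.sum_congr rfl
    intro l _
    exact intervalIntegral.integral_const_mul _ _
  · intro l _
    exact (continuous_const.mul (Bp l * Bp (n-l)).continuous).intervalIntegrable _ _

lemma int_Rf (n : ℕ) (hn : 1 ≤ n) : ∫ x in (0:ℝ)..1, Rf a b n x
    = cc a b n * βr n + Kc a b * n * (if n = 1 then 1 else 0) := by
  have hint1 : ∀ l, IntervalIntegrable
      (fun x => (n.choose l : ℝ) * cc a b l * βr l * (Bp (n-l)).eval x) MeasureTheory.volume 0 1 :=
    fun l => (continuous_const.mul (Bp (n-l)).continuous).intervalIntegrable _ _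
  have hs := IntervalIntegrable.sum (μ := MeasureTheory.volume) (a:=0) (b:=1) (range (n+1)) (fun l _ => hint1 l)
  have h2 : IntervalIntegrable (fun x => Kc a b * (n:ℝ) * (Bp (n-1)).eval x)
      MeasureTheory.volume 0 1 :=
    (continuous_const.mul (Bp (n-1)).continuous).intervalIntegrable 0 1
  have hadd := intervalIntegral.integral_add hs h2
  simp only [Finset.sum_apply] at hadd
  simp only [Rf]
  rw [hadd]
  rw [intervalIntegral.integral_finset_sum (fun l _ => hint1 l)]
  congr 1
  · rw [Finset.sum_range_succ]
    have h0 : ∀ l ∈ range n,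
        ∫ x in (0:ℝ)..1, (n.choose l : ℝ) * cc a b l * βr l * (Bp (n-l)).eval x = 0 := by
      intro l hl
      rw [intervalIntegral.integral_const_mul]
      have : J (Bp (n-l)) = 0 := J_Bp _ (by simp only [Finset.mem_range] at hl; omega)
      rw [show (∫ x in (0:ℝ)..1, (Bp (n-l)).eval x) = J (Bp (n-l)) from rfl, this, mul_zero]
    rw [Finset.sum_eq_zero h0, zero_add, intervalIntegral.integral_const_mul]
    rw [Nat.sub_self, show (∫ x in (0:ℝ)..1, (Bp 0).eval x) = J (Bp 0) from rfl, J_Bp_zero,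
      Nat.choose_self]
    push_cast; ring
  · rw [intervalIntegral.integral_const_mul,
      show (∫ x in (0:ℝ)..1, (Bp (n-1)).eval x) = J (Bp (n-1)) from rfl]
    by_cases h : n = 1
    · subst h; simp [J_Bp_zero]
    · rw [J_Bp (n-1) (by omega), if_neg h]

lemma telescope (m : ℕ) :
    (a + b + ((m:ℝ)+1)) * ∑ j ∈ range m,
        (-1:ℝ)^j * ((ascPochhammer ℝ (j+1)).eval a * (ascPochhammer ℝ (m-j)).eval b)
      = a * (ascPochhammer ℝ (m+1)).eval b
        + (-1:ℝ)^(m+1) * ((ascPochhammer ℝ (m+1)).eval a * b) := by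
  set g : ℕ → ℝ := fun j => (-1:ℝ)^j * ((ascPochhammer ℝ (j+1)).eval a
    * (ascPochhammer ℝ (m+1-j)).eval b) with hg
  have hterm : ∀ j ∈ range m,
      (a + b + ((m:ℝ)+1)) * ((-1:ℝ)^j * ((ascPochhammer ℝ (j+1)).eval a
        * (ascPochhammer ℝ (m-j)).eval b)) = g j - g (j+1) := by
    intro j hj
    have hjm : j < m := by simpa using hj
    have e1 : m + 1 - j = (m - j) + 1 := by omega
    have e2 : m + 1 - (j+1) = m - j := by omega
    simp only [hg, e1, e2, ascPochhammer_succ_eval, pow_succ]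
    have hcast : ((m - j : ℕ) : ℝ) = (m:ℝ) - j := by
      rw [Nat.cast_sub (by omega)]
    rw [hcast]
    push_cast
    ring
  rw [Finset.mul_sum, Finset.sum_congr rfl hterm, Finset.sum_range_sub' g m]
  have e4 : m + 1 - m = 1 := by omega
  have hg0 : g 0 = a * (ascPochhammer ℝ (m+1)).eval b := by
    simp [hg, ascPochhammer_one]
  have hgm : g m = (-1:ℝ)^m * ((ascPochhammer ℝ (m+1)).eval a * b) := by
    simp [hg, e4, ascPochhammer_one]
  rw [hg0, hgm, pow_succ]
  ring

lemma bern_odd (n : ℕ) (h : Odd n) (h1 : n ≠ 1) : βr n = 0 := by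
  rcases Nat.lt_or_ge n 2 with h2 | h2
  · interval_cases n
    · exact absurd h (by decide)
    · omega
  · rw [βr, bernoulli_eq_bernoulli'_of_ne_one h1, bernoulli'_eq_zero_of_odd h (by omega)]
    norm_num

lemma int_LR (ha : 0 < a) (hb : 0 < b) (n : ℕ) (hn : 1 ≤ n) :
    ∫ x in (0:ℝ)..1, Lf a b n x = ∫ x in (0:ℝ)..1, Rf a b n x := by
  obtain ⟨m, rfl⟩ : ∃ m, n = m + 1 := ⟨n-1, by omega⟩
  have hab : (0:ℝ) < a + b := by linarith
  have hP : ∀ k : ℕ, (0:ℝ) < (ascPochhammer ℝ k).eval (a+b) := fun k =>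
    ascPochhammer_pos k (a+b) hab
  rw [int_Lf, int_Rf (m+1) (by omega)]
  have hL : ∑ l ∈ range (m+1+1), ((m+1).choose l : ℝ) * wc a b (m+1) l * J (Bp l * Bp (m+1-l))
      = (∑ j ∈ range m, (-1:ℝ)^j * ((ascPochhammer ℝ (j+1)).eval a
          * (ascPochhammer ℝ (m-j)).eval b)) * βr (m+1)
          / (ascPochhammer ℝ (m+1)).eval (a+b) := by
    rw [Finset.sum_range_succ']
    have hz0 : (((m+1)).choose 0 : ℝ) * wc a b (m+1) 0 * J (Bp 0 * Bp (m+1-0)) = 0 := by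
      rw [Bp_zero, one_mul, J_Bp _ (by omega), mul_zero]
    rw [hz0, add_zero, Finset.sum_range_succ]
    have hzn : ((m+1).choose (m+1) : ℝ) * wc a b (m+1) (m+1) * J (Bp (m+1) * Bp (m+1-(m+1))) = 0 := by
      rw [Nat.sub_self, Bp_zero, mul_one, J_Bp _ (by omega), mul_zero]
    rw [hzn, add_zero, Finset.sum_mul, Finset.sum_div]
    apply Finset.sum_congr rfl
    intro j hj
    have hjr : j < m := by simpa using hj
    have hkey := J_BB (j+1) (m+1-(j+1)) (by omega) (by omega)
    have e1 : (j+1) + (m+1-(j+1)) = m+1 := by omega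
    rw [e1, show j + 1 - 1 = j from by omega] at hkey
    have e2 : m+1-(j+1) = m-j := by omega
    calc ((m+1).choose (j+1) : ℝ) * wc a b (m+1) (j+1) * J (Bp (j+1) * Bp (m+1-(j+1)))
        = wc a b (m+1) (j+1) * (((m+1).choose (j+1) : ℝ) * J (Bp (j+1) * Bp (m+1-(j+1)))) := by
          ring
      _ = wc a b (m+1) (j+1) * ((-1:ℝ)^j * βr (m+1)) := by rw [hkey]
      _ = (-1:ℝ)^j * ((ascPochhammer ℝ (j+1)).eval a * (ascPochhammer ℝ (m-j)).eval b)
            * βr (m+1) / (ascPochhammer ℝ (m+1)).eval (a+b) := by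
          rw [wc, e2]; ring
  rw [hL]
  have habn : (0:ℝ) < a + b + ((m:ℝ)+1) := by positivity
  have hP1 : (ascPochhammer ℝ (m+1+1)).eval (a+b)
      = (ascPochhammer ℝ (m+1)).eval (a+b) * (a+b+((m:ℝ)+1)) := by
    rw [ascPochhammer_succ_eval]
    push_cast
    ring
  have htel := telescope (a := a) (b := b) m
  have hsum_eq : (∑ j ∈ range m, (-1:ℝ)^j * ((ascPochhammer ℝ (j+1)).eval a
      * (ascPochhammer ℝ (m-j)).eval b))
      = (a * (ascPochhammer ℝ (m+1)).eval b
          + (-1:ℝ)^(m+1) * ((ascPochhammer ℝ (m+1)).eval a * b)) / (a+b+((m:ℝ)+1)) := by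
    rw [eq_div_iff (ne_of_gt habn), mul_comm]
    exact htel
  rw [hsum_eq, cc, hP1]
  rcases Nat.even_or_odd (m+1) with he | ho
  · have hne1 : m + 1 ≠ 1 := by
      rintro h
      rw [h] at he
      exact (Nat.not_even_iff_odd.2 (by decide)) he
    rw [if_neg hne1, mul_zero, add_zero, Even.neg_one_pow he, one_mul]
    have h1 := ne_of_gt (hP (m+1))
    push_cast
    field_simp
  · by_cases h1 : m = 0
    · subst h1
      rw [if_pos rfl]
      have hβ1 : βr 1 = -(1/2) := by rw [βr, _root_.bernoulli_one]; norm_num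
      simp only [zero_add, ascPochhammer_one, eval_X, hβ1, Kc, pow_one, pow_succ, pow_zero, one_mul]
      field_simp
      ring
    · have hβ : βr (m+1) = 0 := bern_odd (m+1) ho (by omega)
      rw [hβ, if_neg (by omega : m + 1 ≠ 1)]
      simp

lemma cont_Lf (n : ℕ) : Continuous (Lf a b n) :=
  continuous_finset_sum _ fun l _ =>
    (continuous_const.mul (Bp l).continuous).mul (Bp (n-l)).continuous

lemma cont_Rf (n : ℕ) : Continuous (Rf a b n) :=
  (continuous_finset_sum _ fun l _ =>
    continuous_const.mul (Bp (n-l)).continuous).add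
      (continuous_const.mul (Bp (n-1)).continuous)

lemma main_eq (ha : 0 < a) (hb : 0 < b) : ∀ n : ℕ, ∀ x : ℝ, Lf a b n x = Rf a b n x := by
  intro n
  induction n with
  | zero =>
    intro x
    have hab : a + b ≠ 0 := by positivity
    simp only [Lf, Rf, wc, cc, Kc, βr, zero_add, Finset.sum_range_one, Nat.choose_self,
      Nat.cast_one, Nat.sub_self, Bp_zero, eval_one, ascPochhammer_zero, ascPochhammer_one,
      eval_X, Nat.cast_zero, _root_.bernoulli_zero, Rat.cast_one, zero_mul, mul_zero, add_zero,
      mul_one, one_mul, Nat.zero_sub, Nat.choose_zero_right]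
    rw [div_self hab]
    norm_num
  | succ k ih =>
    intro x
    have hderiv : ∀ y : ℝ, HasDerivAt (fun t => Lf a b (k+1) t - Rf a b (k+1) t) 0 y := by
      intro y
      have h1 := hasDerivAt_Lf ha hb k y
      have h2 := hasDerivAt_Rf (a := a) (b := b) k y
      have h3 := h1.sub h2
      rw [ih y, sub_self] at h3
      exact h3
    set D : ℝ → ℝ := fun t => Lf a b (k+1) t - Rf a b (k+1) t with hD
    have hdiff : Differentiable ℝ D := fun y => (hderiv y).differentiableAt
    have hconst : ∀ y z : ℝ, D y = D z := fun y z =>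
      is_const_of_deriv_eq_zero hdiff (fun t => (hderiv t).deriv) y z
    have hint : ∫ t in (0:ℝ)..1, D t = D x := by
      have hfun : D = fun _ : ℝ => D x := funext fun t => hconst t x
      rw [hfun, intervalIntegral.integral_const]
      norm_num
    have hzero : ∫ t in (0:ℝ)..1, D t = 0 := by
      have hsub : ∫ t in (0:ℝ)..1, (Lf a b (k+1) t - Rf a b (k+1) t)
          = (∫ t in (0:ℝ)..1, Lf a b (k+1) t) - ∫ t in (0:ℝ)..1, Rf a b (k+1) t :=
        intervalIntegral.integral_sub ((cont_Lf (k+1)).intervalIntegrable 0 1)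
          ((cont_Rf (k+1)).intervalIntegrable 0 1)
      rw [hD]
      rw [hsub, int_LR ha hb (k+1) (by omega), sub_self]
    have hx : D x = 0 := by rw [← hint, hzero]
    have := sub_eq_zero.mp hx
    exact this

end GBCProof

theorem general_bernoulli_convolution (n : ℕ) (hn : 1 ≤ n) (a b : ℝ)
    (ha : 0 < a) (hb : 0 < b) (x : ℝ) :
    ∑ l ∈ Finset.range (n + 1), (n.choose l : ℝ) *
        ((ascPochhammer ℝ l).eval a * (ascPochhammer ℝ (n - l)).eval b /
          (ascPochhammer ℝ n).eval (a + b)) *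
        (aeval x (Polynomial.bernoulli l)) * (aeval x (Polynomial.bernoulli (n - l)))
      = (∑ l ∈ Finset.range (n + 1), (n.choose l : ℝ) *
          ((a * (ascPochhammer ℝ l).eval b + b * (ascPochhammer ℝ l).eval a) /
            (ascPochhammer ℝ (l + 1)).eval (a + b)) *
          ((bernoulli l : ℚ) : ℝ) * aeval x (Polynomial.bernoulli (n - l)))
        + a * b / ((a + b + 1) * (a + b)) * n * aeval x (Polynomial.bernoulli (n - 1)) := by
  have h := main_eq ha hb n x
  simpa only [Lf, Rf, wc, cc, Kc, βr, Bp_eval_eq_aeval] using h
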